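/- For every formula α in negation normal form, there exists a derivation from ⊥ to α using only atomic weakening (⊥ → a), switch, and equality steps, of length O(|α|) and size O(|α|²). -/
import Mathlib


/-- Formulae of the calculus of structures in negation normal form. -/
inductive Formula : Type
  | top : Formula
  | bot : Formula
  | atom : ℕ → Formula
  | natom : ℕ → Formula
  | or : Formula → Formula → Formula
  | and : Formula → Formula → Formula
deriving DecidableEq

/-- Boolean evaluation of a formula under an assignment. -/
def Formula.eval (v : ℕ → Bool) : Formula → Bool
  | .top => true
  | .bot => false
  | .atom n => v n
  | .natom n => !(v n)
  | .or a b => a.eval v || b.eval v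
  | .and a b => a.eval v && b.eval v

/-- Size of a formula: number of unit and atom occurrences. -/
def Formula.size : Formula → ℕ
  | .top => 1
  | .bot => 1
  | .atom _ => 1
  | .natom _ => 1
  | .or a b => a.size + b.size
  | .and a b => a.size + b.size

/-- De Morgan dual (negation in negation normal form). -/
def Formula.dual : Formula → Formula
  | .top => .bot
  | .bot => .top
  | .atom n => .natom n
  | .natom n => .atom n
  | .or a b => .and a.dual b.dual
  | .and a b => .or a.dual b.dual

/-- The equality relation `=` on formulae: commutativity, associativity, unit
laws, closed under reflexivity, symmetry, transitivity and context closure. -/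
inductive FEq : Formula → Formula → Prop
  | orComm (a b) : FEq (.or a b) (.or b a)
  | andComm (a b) : FEq (.and a b) (.and b a)
  | orAssoc (a b c) : FEq (.or (.or a b) c) (.or a (.or b c))
  | andAssoc (a b c) : FEq (.and (.and a b) c) (.and a (.and b c))
  | orBot (a) : FEq (.or a .bot) a
  | andTop (a) : FEq (.and a .top) a
  | topTop : FEq (.or .top .top) .top
  | botBot : FEq (.and .bot .bot) .bot
  | refl (a) : FEq a a
  | symm {a b} : FEq a b → FEq b a
  | trans {a b c} : FEq a b → FEq b c → FEq a c
  | orCongL {a b} (c) : FEq a b → FEq (.or a c) (.or b c)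
  | orCongR {a b} (c) : FEq a b → FEq (.or c a) (.or c b)
  | andCongL {a b} (c) : FEq a b → FEq (.and a c) (.and b c)
  | andCongR {a b} (c) : FEq a b → FEq (.and c a) (.and c b)

/-- Closure of a rule relation under arbitrary formula contexts. -/
inductive CtxStep (R : Formula → Formula → Prop) : Formula → Formula → Prop
  | base {a b} : R a b → CtxStep R a b
  | orL {a b} (c) : CtxStep R a b → CtxStep R (.or a c) (.or b c)
  | orR {a b} (c) : CtxStep R a b → CtxStep R (.or c a) (.or c b)
  | andL {a b} (c) : CtxStep R a b → CtxStep R (.and a c) (.and b c)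
  | andR {a b} (c) : CtxStep R a b → CtxStep R (.and c a) (.and c b)

/-- `Deriv R α β l s`: there is a derivation from premiss `α` to conclusion `β`
using rules from `R` (applied inside contexts), of length `l` and total size `s`
(the sum of the sizes of all formulae appearing in the derivation). -/
inductive Deriv (R : Formula → Formula → Prop) : Formula → Formula → ℕ → ℕ → Prop
  | refl (a) : Deriv R a a 0 a.size
  | step {a b c l s} : CtxStep R a b → Deriv R b c l s → Deriv R a c (l + 1) (s + a.size)

/-- Rules allowed in Lemma LemGWeak: atomic weakening, switch and equality. -/
inductive AwSwEq : Formula → Formula → Prop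
  | aw (a : ℕ) : AwSwEq .bot (.atom a)
  | aw' (a : ℕ) : AwSwEq .bot (.natom a)
  | sw (A B C : Formula) : AwSwEq (.and A (.or B C)) (.or (.and A B) C)
  | eqv {a b : Formula} : FEq a b → AwSwEq a b

lemma Formula.size_pos (a : Formula) : 1 ≤ a.size := by
  induction a <;> simp [Formula.size] <;> omega

lemma Deriv.size_le {R} {a c : Formula} {l s : ℕ} (d : Deriv R a c l s) :
    a.size ≤ s := by
  induction d with
  | refl a => exact le_refl _
  | step h d ih => omega

lemma Deriv.comp {R} {a b c : Formula} {l1 s1 l2 s2 : ℕ}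
    (d1 : Deriv R a b l1 s1) (d2 : Deriv R b c l2 s2) :
    ∃ s, Deriv R a c (l1 + l2) s ∧ s ≤ s1 + s2 := by
  induction d1 with
  | refl a => exact ⟨s2, by simpa using d2, by omega⟩
  | @step a a' b l s h d ih =>
    obtain ⟨s', hd, hs⟩ := ih d2
    exact ⟨s' + a.size, by simpa [Nat.add_right_comm l l2 1] using hd.step h, by omega⟩

lemma Deriv.liftOrL {R} {a b : Formula} {l s : ℕ} (c : Formula)
    (d : Deriv R a b l s) :
    Deriv R (.or a c) (.or b c) l (s + (l + 1) * c.size) := by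
  induction d with
  | refl a => simpa [Formula.size] using Deriv.refl (R := R) (.or a c)
  | @step a a' b l s h d ih =>
    have := (ih).step (CtxStep.orL c h)
    have heq : s + (l + 1) * c.size + (Formula.or a c).size
        = s + a.size + (l + 1 + 1) * c.size := by
      simp [Formula.size]; ring
    rw [heq] at this
    exact this

lemma Deriv.liftOrR {R} {a b : Formula} {l s : ℕ} (c : Formula)
    (d : Deriv R a b l s) :
    Deriv R (.or c a) (.or c b) l (s + (l + 1) * c.size) := by
  induction d with
  | refl a =>
    have : (Formula.or c a).size = a.size + (0 + 1) * c.size := by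
      simp [Formula.size]; ring
    simpa [this] using Deriv.refl (R := R) (.or c a)
  | @step a a' b l s h d ih =>
    have := (ih).step (CtxStep.orR c h)
    have heq : s + (l + 1) * c.size + (Formula.or c a).size
        = s + a.size + (l + 1 + 1) * c.size := by
      simp [Formula.size]; ring
    rw [heq] at this
    exact this

lemma Deriv.liftAndL {R} {a b : Formula} {l s : ℕ} (c : Formula)
    (d : Deriv R a b l s) :
    Deriv R (.and a c) (.and b c) l (s + (l + 1) * c.size) := by
  induction d with
  | refl a => simpa [Formula.size] using Deriv.refl (R := R) (.and a c)
  | @step a a' b l s h d ih =>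
    have := (ih).step (CtxStep.andL c h)
    have heq : s + (l + 1) * c.size + (Formula.and a c).size
        = s + a.size + (l + 1 + 1) * c.size := by
      simp [Formula.size]; ring
    rw [heq] at this
    exact this

lemma Deriv.liftAndR {R} {a b : Formula} {l s : ℕ} (c : Formula)
    (d : Deriv R a b l s) :
    Deriv R (.and c a) (.and c b) l (s + (l + 1) * c.size) := by
  induction d with
  | refl a =>
    have : (Formula.and c a).size = a.size + (0 + 1) * c.size := by
      simp [Formula.size]; ring
    simpa [this] using Deriv.refl (R := R) (.and c a)
  | @step a a' b l s h d ih =>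
    have := (ih).step (CtxStep.andR c h)
    have heq : s + (l + 1) * c.size + (Formula.and c a).size
        = s + a.size + (l + 1 + 1) * c.size := by
      simp [Formula.size]; ring
    rw [heq] at this
    exact this

/-- One equality step as a derivation. -/
lemma Deriv.eqStep {a b : Formula} (h : FEq a b) :
    Deriv AwSwEq a b 1 (b.size + a.size) :=
  Deriv.step (CtxStep.base (AwSwEq.eqv h)) (Deriv.refl b)

/-- Derivation of `⊤` from `⊥` in three steps of total size 8. -/
lemma Deriv.botToTop : Deriv AwSwEq .bot .top 3 8 := by
  have e1 : FEq .bot (.and .bot (.or .bot .top)) := by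
    refine FEq.trans (FEq.symm (FEq.andTop .bot)) (FEq.andCongR .bot ?_)
    exact FEq.trans (FEq.symm (FEq.orBot .top)) (FEq.orComm .top .bot)
  have e3 : FEq (.or (.and .bot .bot) .top) .top := by
    refine FEq.trans (FEq.orCongL .top FEq.botBot) ?_
    exact FEq.trans (FEq.orComm .bot .top) (FEq.orBot .top)
  have d : Deriv AwSwEq .bot .top (0 + 1 + 1 + 1) (((1 + 3) + 3) + 1) := by
    refine Deriv.step (CtxStep.base (AwSwEq.eqv e1)) ?_
    refine Deriv.step (CtxStep.base (AwSwEq.sw .bot .bot .top)) ?_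
    exact Deriv.step (CtxStep.base (AwSwEq.eqv e3)) (Deriv.refl .top)
  simpa [Formula.size] using d

lemma main_construction (α : Formula) :
    ∃ l s : ℕ, Deriv AwSwEq .bot α l s ∧
      l + 1 ≤ 4 * α.size ∧ s ≤ 8 * α.size ^ 2 := by
  induction α with
  | top => exact ⟨3, 8, Deriv.botToTop, by simp [Formula.size], by simp [Formula.size]⟩
  | bot => exact ⟨0, 1, by simpa [Formula.size] using Deriv.refl (R := AwSwEq) .bot,
      by simp [Formula.size], by simp [Formula.size]⟩
  | atom n =>
    refine ⟨1, 2, ?_, by simp [Formula.size], by simp [Formula.size]⟩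
    have := Deriv.step (CtxStep.base (AwSwEq.aw n)) (Deriv.refl (.atom n))
    simpa [Formula.size] using this
  | natom n =>
    refine ⟨1, 2, ?_, by simp [Formula.size], by simp [Formula.size]⟩
    have := Deriv.step (CtxStep.base (AwSwEq.aw' n)) (Deriv.refl (.natom n))
    simpa [Formula.size] using this
  | or β γ ihβ ihγ =>
    obtain ⟨lβ, sβ, dβ, hlβ, hsβ⟩ := ihβ
    obtain ⟨lγ, sγ, dγ, hlγ, hsγ⟩ := ihγ
    have nβ := β.size_pos
    have nγ := γ.size_pos
    -- prefix: ⊥ → ⊥ ∨ ⊥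
    have d0 : Deriv AwSwEq .bot (.or .bot .bot) 1 3 := by
      simpa [Formula.size] using Deriv.eqStep (FEq.symm (FEq.orBot .bot))
    have d1 := dβ.liftOrL .bot
    have d2 := dγ.liftOrR β
    obtain ⟨s1, d01, hs1⟩ := d0.comp d1
    obtain ⟨s2, d012, hs2⟩ := d01.comp d2
    refine ⟨1 + lβ + lγ, s2, d012, ?_, ?_⟩
    · simp only [Formula.size]; omega
    · have : s2 ≤ 3 + (sβ + (lβ + 1) * 1) + (sγ + (lγ + 1) * β.size) := by
        simp only [Formula.size, Nat.mul_one] at hs1 hs2 ⊢; omega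
      simp only [Formula.size]
      nlinarith [sq_nonneg (β.size - γ.size : ℤ)]
  | and β γ ihβ ihγ =>
    obtain ⟨lβ, sβ, dβ, hlβ, hsβ⟩ := ihβ
    obtain ⟨lγ, sγ, dγ, hlγ, hsγ⟩ := ihγ
    have nβ := β.size_pos
    have nγ := γ.size_pos
    have d0 : Deriv AwSwEq .bot (.and .bot .bot) 1 3 := by
      simpa [Formula.size] using Deriv.eqStep (FEq.symm FEq.botBot)
    have d1 := dβ.liftAndL .bot
    have d2 := dγ.liftAndR β
    obtain ⟨s1, d01, hs1⟩ := d0.comp d1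
    obtain ⟨s2, d012, hs2⟩ := d01.comp d2
    refine ⟨1 + lβ + lγ, s2, d012, ?_, ?_⟩
    · simp only [Formula.size]; omega
    · have : s2 ≤ 3 + (sβ + (lβ + 1) * 1) + (sγ + (lγ + 1) * β.size) := by
        simp only [Formula.size, Nat.mul_one] at hs1 hs2 ⊢; omega
      simp only [Formula.size]
      nlinarith [sq_nonneg (β.size - γ.size : ℤ)]

/-- Lemma LemGWeak: for every formula `α` there is a derivation
from `⊥` to `α` using only atomic weakening, switch and equality, of length
`O(|α|)` and size `O(|α|²)`. -/
theorem atomic_weakening_derivable :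
    ∃ C : ℕ, ∀ α : Formula, ∃ l s : ℕ,
      Deriv AwSwEq .bot α l s ∧
      l ≤ C * α.size ∧ s ≤ C * α.size ^ 2 := by
  refine ⟨8, fun α => ?_⟩
  obtain ⟨l, s, d, hl, hs⟩ := main_construction α
  exact ⟨l, s, d, by have := α.size_pos; omega, hs⟩
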